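/- arXiv:1008.3470 — 2 statements merged into one kernel-verified Lean document; each statement's English description precedes it below -/
import Mathlib

section
/- If a group G acts 3-discontinuously on a compactum T and A is a discrete G-finite set of entourages of T, then the induced action of G on the compactum T̃ = T ⊔ A is also 3-discontinuous. -/
namespace RHG

/-- Triples with pairwise distinct components. -/
def distinct3 {X : Type*} : Set (X × X × X) :=
  {x | x.1 ≠ x.2.1 ∧ x.1 ≠ x.2.2 ∧ x.2.1 ≠ x.2.2}

/-- Pairs with distinct components. -/
def distinct2 {X : Type*} : Set (X × X) := {x | x.1 ≠ x.2}

/-- The action `act` of `G` on `X` is 3-discontinuous: the induced action on the space of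
(ordered) triples of pairwise distinct points is properly discontinuous. -/
def ThreeDisc {G X : Type*} [TopologicalSpace X] (act : G → X → X) : Prop :=
  ∀ K : Set (X × X × X), IsCompact K → K ⊆ distinct3 →
    Set.Finite {g : G |
      (((fun x : X × X × X => (act g x.1, act g x.2.1, act g x.2.2)) '' K) ∩ K).Nonempty}

/-- The action `act` of `G` on `X` is 2-cocompact: the action on the space of (ordered) pairs
of distinct points is cocompact. -/
def TwoCocompact {G X : Type*} [TopologicalSpace X] (act : G → X → X) : Prop :=
  ∃ K : Set (X × X), IsCompact K ∧ K ⊆ distinct2 ∧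
    ∀ x : X × X, x ∈ (distinct2 : Set (X × X)) → ∃ g : G, (act g x.1, act g x.2) ∈ K

/-- `ρ` is an action of the group `G` on `T` by homeomorphisms. -/
structure IsTopAction (G : Type*) [Group G] (T : Type*) [TopologicalSpace T]
    (ρ : G → T ≃ₜ T) : Prop where
  map_one : ρ 1 = Homeomorph.refl T
  map_mul : ∀ g h : G, ρ (g * h) = (ρ h).trans (ρ g)

/-- The stabilizer of a point for an action by homeomorphisms. -/
def actStab {G : Type*} [Group G] {T : Type*} [TopologicalSpace T]
    (ρ : G → T ≃ₜ T) (hρ : IsTopAction G T ρ) (p : T) : Subgroup G where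
  carrier := {g : G | ρ g p = p}
  one_mem' := by
    simp only [Set.mem_setOf_eq, hρ.map_one, Homeomorph.refl_apply, id_eq]
  mul_mem' := by
    intro a b ha hb
    simp only [Set.mem_setOf_eq] at *
    rw [hρ.map_mul, Homeomorph.trans_apply, hb, ha]
  inv_mem' := by
    intro a ha
    simp only [Set.mem_setOf_eq] at *
    have h1 : ρ (a⁻¹ * a) p = ρ a⁻¹ (ρ a p) := by
      rw [hρ.map_mul, Homeomorph.trans_apply]
    rw [inv_mul_cancel, hρ.map_one, ha] at h1
    simpa using h1.symm

/-- A parabolic point: its stabilizer is infinite and it is the unique fixed point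
of its stabilizer. -/
def IsParabolicPt {G : Type*} [Group G] {T : Type*} [TopologicalSpace T]
    (ρ : G → T ≃ₜ T) (hρ : IsTopAction G T ρ) (p : T) : Prop :=
  Set.Infinite ((actStab ρ hρ p : Set G)) ∧
    ∀ q : T, (∀ g ∈ actStab ρ hρ p, ρ g q = q) → q = p

/-- `T` contains at least three points. -/
def HasThreePts (T : Type*) : Prop := ∃ x y z : T, x ≠ y ∧ x ≠ z ∧ y ≠ z

end RHG

namespace RHG

/-- An entourage of a topological space `T`: a symmetric neighborhood of the diagonal
in `T × T` (identified with a neighborhood of the diagonal in the symmetric square). -/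
structure Entourage (T : Type*) [TopologicalSpace T] where
  carrier : Set (T × T)
  symm' : ∀ x y : T, (x, y) ∈ carrier → (y, x) ∈ carrier
  mem_nhds' : ∀ x : T, carrier ∈ nhds (x, x)

variable {T : Type*} [TopologicalSpace T]

/-- A set is `e`-small if its `Δ_e`-diameter is at most 1, i.e. any two of its points
form a pair belonging to `e`. -/
def eSmall (e : Entourage T) (s : Set T) : Prop :=
  ∀ x ∈ s, ∀ y ∈ s, (x, y) ∈ e.carrier

/-- `Δ_e (x, y) ≤ k` for the maximal metric `Δ_e` with `Δ_e ≤ 1` on pairs of `e`: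
there is a chain of length `k` from `x` to `y` with consecutive pairs in `e`. -/
def eDistLE (e : Entourage T) (k : ℕ) (x y : T) : Prop :=
  ∃ c : ℕ → T, c 0 = x ∧ c k = y ∧ ∀ i < k, (c i, c (i + 1)) ∈ e.carrier

/-- Two entourages are unlinked if `T` is the union of an `a`-small and a `b`-small set. -/
def EntUnlinked (a b : Entourage T) : Prop :=
  ∃ sa sb : Set T, eSmall a sa ∧ eSmall b sb ∧ sa ∪ sb = Set.univ

/-- Two entourages are linked if they are not unlinked. -/
def EntLinked (a b : Entourage T) : Prop := ¬ EntUnlinked a b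

/-- Standing convention on entourages: self-linked, and `Δ_e`-diameter of `T` greater
than `4`. -/
def GoodEnt (e : Entourage T) : Prop :=
  EntLinked e e ∧ ∃ x y : T, ¬ eDistLE e 4 x y

/-- The shadow `sh_a b`: the intersection of all `a`-small sets with `b`-small complement. -/
def shadow (a b : Entourage T) : Set T :=
  ⋂₀ {s : Set T | eSmall a s ∧ eSmall b sᶜ}

/-- The betweenness relation `a − b − c (k)`:
`a ⋈ b ⋈ c` and `Δ_b(sh_b a, sh_b c) > k`. -/
def Btw (a b c : Entourage T) (k : ℕ) : Prop :=
  EntUnlinked a b ∧ EntUnlinked b c ∧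
    ∀ x ∈ shadow b a, ∀ y ∈ shadow b c, ¬ eDistLE b k x y

/-- The betweenness relation `a − b − p (k)` for a point `p ∈ T`:
`a ⋈ b` and `Δ_b(sh_b a, b₀) > k` for every `b`-small neighborhood `b₀` of `p`. -/
def BtwP (a b : Entourage T) (p : T) (k : ℕ) : Prop :=
  EntUnlinked a b ∧
    ∀ s : Set T, eSmall b s → s ∈ nhds p → ∀ x ∈ shadow b a, ∀ y ∈ s, ¬ eDistLE b k x y

/-- The betweenness relation `p − b − q (k)` for points `p, q ∈ T`:
`Δ_b(b₁, b₂) > k` for all `b`-small neighborhoods `b₁` of `p` and `b₂` of `q`. -/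
def BtwPP (p : T) (b : Entourage T) (q : T) (k : ℕ) : Prop :=
  ∀ s₁ s₂ : Set T, eSmall b s₁ → s₁ ∈ nhds p → eSmall b s₂ → s₂ ∈ nhds q →
    ∀ x ∈ s₁, ∀ y ∈ s₂, ¬ eDistLE b k x y

/-- The image of an entourage under a homeomorphism of `T`. -/
def entMap (φ : T ≃ₜ T) (e : Entourage T) : Entourage T where
  carrier := (fun x : T × T => ((φ.symm x.1 : T), (φ.symm x.2 : T))) ⁻¹' e.carrier
  symm' := fun x y h => e.symm' _ _ h
  mem_nhds' := fun x => by
    have hcont : Continuous fun x : T × T => ((φ.symm x.1 : T), (φ.symm x.2 : T)) :=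
      (φ.symm.continuous.comp continuous_fst).prodMk (φ.symm.continuous.comp continuous_snd)
    exact hcont.continuousAt.preimage_mem_nhds (e.mem_nhds' (φ.symm x))

/-- The orbit of an entourage under an action of `G` on `T` by homeomorphisms. -/
def entOrbit {G : Type*} [Group G] (ρ : G → T ≃ₜ T) (a₀ : Entourage T) :
    Set (Entourage T) :=
  {e | ∃ g : G, e = entMap (ρ g) a₀}

/-- A set of entourages is discrete if every entourage is linked with only finitely many
of its elements. -/
def DiscreteEnts (A : Set (Entourage T)) : Prop :=
  ∀ w : Entourage T, Set.Finite {a ∈ A | EntLinked a w}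

/-- `d_A(a, b) ≤ n` in the graph of entourages: there is a walk of length `n` in `A`
from `a` to `b` with consecutive vertices linked. -/
def AdistLE (A : Set (Entourage T)) (n : ℕ) (a b : Entourage T) : Prop :=
  ∃ c : ℕ → Entourage T, c 0 = a ∧ c n = b ∧ (∀ i ≤ n, c i ∈ A) ∧
    ∀ i < n, EntLinked (c i) (c (i + 1))

/-- The `d`-neighborhood of a subset `S` inside the graph of entourages on `A`. -/
def Anbhd (A : Set (Entourage T)) (d : ℕ) (S : Set (Entourage T)) : Set (Entourage T) :=
  {a ∈ A | ∃ b ∈ S, AdistLE A d a b}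

/-- The horosphere `T_{A,k}(p)`: the entourages of `A` which are not separated
from `p` by any element of `A`. -/
def horosphere (A : Set (Entourage T)) (k : ℕ) (p : T) : Set (Entourage T) :=
  {e ∈ A | ¬ ∃ a ∈ A, BtwP e a p k}

/-- `Ψ_k(a,b) = {c ∈ A : a − c − b (k)}`. -/
def Psi (A : Set (Entourage T)) (k : ℕ) (a b : Entourage T) : Set (Entourage T) :=
  {c ∈ A | Btw a c b k}

/-- The topology on `T̃ = T ⊔ A`, generated by the singletons of elements of `A` and
the convex hulls `õ = o ∪ {e ∈ A : oᶜ is e-small}` of open sets `o ⊆ T`. -/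
def tildeTop (A : Set (Entourage T)) : TopologicalSpace (T ⊕ ↥A) :=
  TopologicalSpace.generateFrom
    ({s | ∃ e : ↥A, s = {Sum.inr e}} ∪
      {s | ∃ o : Set T, IsOpen o ∧
        s = Sum.inl '' o ∪ Sum.inr '' {e : ↥A | eSmall (↑e) oᶜ}})

/-- The set of accumulation points of a set `S` in a topological space. -/
def accPts {X : Type*} [TopologicalSpace X] (S : Set X) : Set X :=
  {x | x ∈ closure (S \ {x})}

/-- The extension of the action of `G` on `T` to `T̃ = T ⊔ A`. -/
def tildeAct {G : Type*} [Group G] (ρ : G → T ≃ₜ T) (A : Set (Entourage T))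
    (hinv : ∀ g : G, ∀ a ∈ A, entMap (ρ g) a ∈ A) (g : G) :
    T ⊕ ↥A → T ⊕ ↥A :=
  fun x => match x with
  | Sum.inl t => Sum.inl (ρ g t)
  | Sum.inr e => Sum.inr ⟨entMap (ρ g) ↑e, hinv g (↑e) e.2⟩

/-- The `m`-separation property for a set of entourages. -/
def Separates (A : Set (Entourage T)) (m : ℕ) : Prop :=
  ∀ p q : T, p ≠ q → ∃ a ∈ A, BtwPP p a q m

/-- `A` generates the filter of entourages. -/
def GeneratesFilter (A : Set (Entourage T)) : Prop :=
  ∀ u : Entourage T, ∃ (n : ℕ) (f : Fin n → Entourage T),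
    (∀ i, f i ∈ A) ∧ (⋂ i, (f i).carrier) ⊆ u.carrier

/-- `γ` restricted to the integer interval `[i, j]` is a `c`-quasigeodesic of the graph
of entourages on `A`. -/
def IsQGOn (A : Set (Entourage T)) (c : ℝ) (i j : ℕ) (γ : ℕ → Entourage T) : Prop :=
  ∀ s t : ℕ, i ≤ s → s ≤ j → i ≤ t → t ≤ j →
    (∀ m : ℕ, AdistLE A m (γ s) (γ t) → (1 / c) * |(s : ℝ) - (t : ℝ)| - c < (m : ℝ)) ∧
    ∃ m : ℕ, AdistLE A m (γ s) (γ t) ∧ (m : ℝ) ≤ c * |(s : ℝ) - (t : ℝ)| + c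

/-- `γ : [0, n] → A` is a `c`-quasigeodesic of the graph of entourages on `A`. -/
def IsQG (A : Set (Entourage T)) (c : ℝ) (n : ℕ) (γ : ℕ → Entourage T) : Prop :=
  (∀ i ≤ n, γ i ∈ A) ∧ IsQGOn A c 0 n γ

/-- `γ : [0, n] → A` is a curve (edge-path) in the graph of entourages on `A`. -/
def IsCurve (A : Set (Entourage T)) (n : ℕ) (γ : ℕ → Entourage T) : Prop :=
  (∀ i ≤ n, γ i ∈ A) ∧ ∀ i < n, EntLinked (γ i) (γ (i + 1))

/-- `γ : [0, n] → A` is an `(l, c)`-tight curve (with horosphere parameter `k` and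
neighborhood radius `r`): every subinterval of length at most `l` is a `c`-quasigeodesic,
and if more than `l` points of the image of a subinterval lie in the `r`-neighborhood of
a horosphere of a parabolic point, then the endpoints of the subinterval are at
`d_A`-distance greater than `l/c − c`. -/
def IsTight (A : Set (Entourage T)) (k l : ℕ) (c : ℝ) (r n : ℕ)
    (γ : ℕ → Entourage T) : Prop :=
  IsCurve A n γ ∧
  (∀ i j : ℕ, i ≤ j → j ≤ n → j - i ≤ l → IsQGOn A c i j γ) ∧
  (∀ i j : ℕ, i ≤ j → j ≤ n → ∀ p : T, (horosphere A k p).Infinite →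
    l < Set.ncard ((γ '' Set.Icc i j) ∩ Anbhd A r (horosphere A k p)) →
    ∀ m : ℕ, AdistLE A m (γ i) (γ j) → (l : ℝ) / c - c < (m : ℝ))

/-- The vertex `γ i` of the curve `γ` is `d`-horospherical (with constant `e`): `γ`
contains subsegments `[i₁, i]` and `[i, i₂]` of length greater than `e` lying in the
`d`-neighborhood of the horosphere of a parabolic point. -/
def IsHoroVertex (A : Set (Entourage T)) (k d e n : ℕ) (γ : ℕ → Entourage T)
    (i : ℕ) : Prop :=
  ∃ (p : T) (i₁ i₂ : ℕ), (horosphere A k p).Infinite ∧ i₁ ≤ i ∧ i ≤ i₂ ∧ i₂ ≤ n ∧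
    e < i - i₁ ∧ e < i₂ - i ∧
    ∀ m : ℕ, i₁ ≤ m → m ≤ i₂ → γ m ∈ Anbhd A d (horosphere A k p)

end RHG

namespace RHG


open Filter Topology Set in
private lemma RHGaux_Entourage_ext {T : Type*} [TopologicalSpace T] :
    ∀ {a b : Entourage T}, a.carrier = b.carrier → a = b
  | ⟨_, _, _⟩, ⟨_, _, _⟩, rfl => rfl

private lemma entMap_trans' {T : Type*} [TopologicalSpace T] (φ ψ : T ≃ₜ T) (e : Entourage T) :
    entMap φ (entMap ψ e) = entMap (ψ.trans φ) e := by
  apply RHGaux_Entourage_ext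
  ext ⟨x, y⟩
  simp [entMap]

private lemma entMap_refl' {T : Type*} [TopologicalSpace T] (e : Entourage T) :
    entMap (Homeomorph.refl T) e = e := by
  apply RHGaux_Entourage_ext
  ext ⟨x, y⟩
  simp [entMap]

private lemma mem_entMap' {T : Type*} [TopologicalSpace T] {φ : T ≃ₜ T} {e : Entourage T}
    {x y : T} : ((x, y) ∈ (entMap φ e).carrier) ↔ (φ.symm x, φ.symm y) ∈ e.carrier := Iff.rfl

private lemma entMap_mem_of' {T : Type*} [TopologicalSpace T] {φ : T ≃ₜ T} {e : Entourage T}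
    {x y : T} (h : (φ x, φ y) ∈ (entMap φ e).carrier) : (x, y) ∈ e.carrier := by
  simpa [mem_entMap'] using h

private lemma exists_third' {T : Type*} (h3 : HasThreePts T) (a b : T) :
    ∃ t : T, t ≠ a ∧ t ≠ b := by
  obtain ⟨x, y, z, hxy, hxz, hyz⟩ := id h3
  by_cases hx : x ≠ a ∧ x ≠ b
  · exact ⟨x, hx⟩
  by_cases hy : y ≠ a ∧ y ≠ b
  · exact ⟨y, hy⟩
  by_cases hz : z ≠ a ∧ z ≠ b
  · exact ⟨z, hz⟩
  exfalso
  have hx' : x = a ∨ x = b := by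
    by_cases h : x = a
    · exact Or.inl h
    · push_neg at hx; exact Or.inr (hx h)
  have hy' : y = a ∨ y = b := by
    by_cases h : y = a
    · exact Or.inl h
    · push_neg at hy; exact Or.inr (hy h)
  have hz' : z = a ∨ z = b := by
    by_cases h : z = a
    · exact Or.inl h
    · push_neg at hz; exact Or.inr (hz h)
  rcases hx' with rfl | rfl <;> rcases hy' with h | h <;> rcases hz' with h' | h' <;> simp_all

private lemma exists_ultra_tendsto' {G : Type*} {T : Type*} [TopologicalSpace T]
    [CompactSpace T] (V : Ultrafilter G) (f : G → T) :
    ∃ p : T, Filter.Tendsto f ↑V (nhds p) := by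
  obtain ⟨p, -, hp⟩ := isCompact_univ.ultrafilter_le_nhds (V.map f) (by simp)
  refine ⟨p, ?_⟩
  rwa [Ultrafilter.coe_map] at hp

private lemma tendsto_mem_ultra' {G α : Type*} [TopologicalSpace α] {V : Ultrafilter G}
    {f : G → α} {x : α} {U : Set α} (hf : Filter.Tendsto f ↑V (nhds x)) (hU : IsOpen U)
    (hx : x ∈ U) : {g | f g ∈ U} ∈ V := hf (hU.mem_nhds hx)

private lemma three_sep' {T : Type*} [TopologicalSpace T] [T2Space T]
    (x y z : T) (hxy : x ≠ y) (hxz : x ≠ z) (hyz : y ≠ z) :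
    ∃ U V W : Set T, IsOpen U ∧ IsOpen V ∧ IsOpen W ∧ x ∈ U ∧ y ∈ V ∧ z ∈ W ∧
      Disjoint U V ∧ Disjoint U W ∧ Disjoint V W := by
  obtain ⟨U₁, V₁, hU₁, hV₁, hxU₁, hyV₁, hUV₁⟩ := t2_separation hxy
  obtain ⟨U₂, W₂, hU₂, hW₂, hxU₂, hzW₂, hUW₂⟩ := t2_separation hxz
  obtain ⟨V₃, W₃, hV₃, hW₃, hyV₃, hzW₃, hVW₃⟩ := t2_separation hyz
  exact ⟨U₁ ∩ U₂, V₁ ∩ V₃, W₂ ∩ W₃, hU₁.inter hU₂, hV₁.inter hV₃, hW₂.inter hW₃,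
    ⟨hxU₁, hxU₂⟩, ⟨hyV₁, hyV₃⟩, ⟨hzW₂, hzW₃⟩,
    hUV₁.mono Set.inter_subset_left Set.inter_subset_left,
    hUW₂.mono Set.inter_subset_right Set.inter_subset_left,
    hVW₃.mono Set.inter_subset_right Set.inter_subset_right⟩

/-- The key properness lemma: three "ultrafilter-flow" pairs with pairwise distinct sources
and pairwise distinct targets violate 3-discontinuity of the action on `T`. -/
private lemma flow_L1 {G : Type*} [Group G] {T : Type*} [TopologicalSpace T] [CompactSpace T]
    [T2Space T] (ρ : G → T ≃ₜ T) (h3d : ThreeDisc fun (g : G) (x : T) => ρ g x)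
    (V : Ultrafilter G) (hco : ↑V ≤ (Filter.cofinite : Filter G))
    (p₁ q₁ p₂ q₂ p₃ q₃ : T)
    (hp12 : p₁ ≠ p₂) (hp13 : p₁ ≠ p₃) (hp23 : p₂ ≠ p₃)
    (hq12 : q₁ ≠ q₂) (hq13 : q₁ ≠ q₃) (hq23 : q₂ ≠ q₃)
    (hW1 : ∀ o o' : Set T, IsOpen o → p₁ ∈ o → IsOpen o' → q₁ ∈ o' →
      {g : G | ∃ x, x ∈ o ∧ ρ g x ∈ o'} ∈ V)
    (hW2 : ∀ o o' : Set T, IsOpen o → p₂ ∈ o → IsOpen o' → q₂ ∈ o' →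
      {g : G | ∃ x, x ∈ o ∧ ρ g x ∈ o'} ∈ V)
    (hW3 : ∀ o o' : Set T, IsOpen o → p₃ ∈ o → IsOpen o' → q₃ ∈ o' →
      {g : G | ∃ x, x ∈ o ∧ ρ g x ∈ o'} ∈ V) : False := by
  obtain ⟨U₁, U₂, U₃, hU₁, hU₂, hU₃, hpU₁, hpU₂, hpU₃, hU12, hU13, hU23⟩ :=
    three_sep' p₁ p₂ p₃ hp12 hp13 hp23
  obtain ⟨V₁, V₂, V₃, hV₁, hV₂, hV₃, hqV₁, hqV₂, hqV₃, hV12, hV13, hV23⟩ :=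
    three_sep' q₁ q₂ q₃ hq12 hq13 hq23
  obtain ⟨C₁, hC₁n, hC₁c, hC₁s⟩ := exists_mem_nhds_isClosed_subset (hU₁.mem_nhds hpU₁)
  obtain ⟨C₂, hC₂n, hC₂c, hC₂s⟩ := exists_mem_nhds_isClosed_subset (hU₂.mem_nhds hpU₂)
  obtain ⟨C₃, hC₃n, hC₃c, hC₃s⟩ := exists_mem_nhds_isClosed_subset (hU₃.mem_nhds hpU₃)
  obtain ⟨D₁, hD₁n, hD₁c, hD₁s⟩ := exists_mem_nhds_isClosed_subset (hV₁.mem_nhds hqV₁)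
  obtain ⟨D₂, hD₂n, hD₂c, hD₂s⟩ := exists_mem_nhds_isClosed_subset (hV₂.mem_nhds hqV₂)
  obtain ⟨D₃, hD₃n, hD₃c, hD₃s⟩ := exists_mem_nhds_isClosed_subset (hV₃.mem_nhds hqV₃)
  set CC : Set (T × T × T) := (C₁ ×ˢ (C₂ ×ˢ C₃)) ∪ (D₁ ×ˢ (D₂ ×ˢ D₃)) with hCCdef
  have hne : ∀ {u v : T} {P Q : Set T}, Disjoint P Q → u ∈ P → v ∈ Q → u ≠ v :=
    fun hd hu hv h => Set.disjoint_left.mp hd hu (h ▸ hv)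
  have hCCcomp : IsCompact CC :=
    ((hC₁c.prod (hC₂c.prod hC₃c)).union (hD₁c.prod (hD₂c.prod hD₃c))).isCompact
  have hCC3 : CC ⊆ distinct3 := by
    rintro ⟨a, b, c⟩ (⟨ha, hb, hc⟩ | ⟨ha, hb, hc⟩)
    · exact ⟨hne hU12 (hC₁s ha) (hC₂s hb), hne hU13 (hC₁s ha) (hC₃s hc),
        hne hU23 (hC₂s hb) (hC₃s hc)⟩
    · exact ⟨hne hV12 (hD₁s ha) (hD₂s hb), hne hV13 (hD₁s ha) (hD₃s hc),
        hne hV23 (hD₂s hb) (hD₃s hc)⟩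
  have hZ1 := hW1 (interior C₁) (interior D₁) isOpen_interior
    (mem_interior_iff_mem_nhds.mpr hC₁n) isOpen_interior (mem_interior_iff_mem_nhds.mpr hD₁n)
  have hZ2 := hW2 (interior C₂) (interior D₂) isOpen_interior
    (mem_interior_iff_mem_nhds.mpr hC₂n) isOpen_interior (mem_interior_iff_mem_nhds.mpr hD₂n)
  have hZ3 := hW3 (interior C₃) (interior D₃) isOpen_interior
    (mem_interior_iff_mem_nhds.mpr hC₃n) isOpen_interior (mem_interior_iff_mem_nhds.mpr hD₃n)
  have hZ : ({g : G | ∃ x, x ∈ interior C₁ ∧ ρ g x ∈ interior D₁} ∩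
      ({g : G | ∃ x, x ∈ interior C₂ ∧ ρ g x ∈ interior D₂} ∩
      {g : G | ∃ x, x ∈ interior C₃ ∧ ρ g x ∈ interior D₃})) ∈ V :=
    Filter.inter_mem hZ1 (Filter.inter_mem hZ2 hZ3)
  have hsubZ : ({g : G | ∃ x, x ∈ interior C₁ ∧ ρ g x ∈ interior D₁} ∩
      ({g : G | ∃ x, x ∈ interior C₂ ∧ ρ g x ∈ interior D₂} ∩
      {g : G | ∃ x, x ∈ interior C₃ ∧ ρ g x ∈ interior D₃})) ⊆
      {g : G | (((fun x : T × T × T =>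
        ((fun (g : G) (x : T) => ρ g x) g x.1, (fun (g : G) (x : T) => ρ g x) g x.2.1,
          (fun (g : G) (x : T) => ρ g x) g x.2.2)) '' CC) ∩ CC).Nonempty} := by
    rintro g ⟨⟨x₁, hx₁, hgx₁⟩, ⟨x₂, hx₂, hgx₂⟩, ⟨x₃, hx₃, hgx₃⟩⟩
    refine ⟨(ρ g x₁, ρ g x₂, ρ g x₃), ⟨⟨(x₁, x₂, x₃), ?_, rfl⟩, ?_⟩⟩
    · exact Or.inl ⟨interior_subset hx₁, interior_subset hx₂, interior_subset hx₃⟩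
    · exact Or.inr ⟨interior_subset hgx₁, interior_subset hgx₂, interior_subset hgx₃⟩
  have hfin := (h3d CC hCCcomp hCC3).subset hsubZ
  have hbad : (∅ : Set G) ∈ V := by
    have hcompl := hco hfin.compl_mem_cofinite
    have hmem := Filter.inter_mem hZ hcompl
    refine Filter.mem_of_superset hmem ?_
    rintro g ⟨hg1, hg2⟩
    exact absurd hg1 hg2
  exact Filter.empty_notMem (↑V : Filter G) (by exact_mod_cast hbad)

/-- A good entourage cannot have an infinite stabilizer under a 3-discontinuous action. -/
private lemma stab_contra' {G : Type*} [Group G] {T : Type*} [TopologicalSpace T]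
    [CompactSpace T] [T2Space T] (ρ : G → T ≃ₜ T)
    (h3d : ThreeDisc fun (g : G) (x : T) => ρ g x)
    (a : Entourage T) (hga : GoodEnt a)
    (H : Set G) (hH : H.Infinite) (hfix : ∀ h ∈ H, entMap (ρ h) a = a) : False := by
  haveI hne : Filter.NeBot ((Filter.cofinite : Filter G) ⊓ Filter.principal H) :=
    hH.cofinite_inf_principal_neBot
  obtain ⟨V, hV⟩ := Ultrafilter.exists_le ((Filter.cofinite : Filter G) ⊓ Filter.principal H)
  have hco : ↑V ≤ (Filter.cofinite : Filter G) := hV.trans inf_le_left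
  have hHV : H ∈ V := Filter.le_principal_iff.mp (hV.trans inf_le_right)
  choose φ hφ using fun u : T => exists_ultra_tendsto' V (fun h : G => (ρ h u : T))
  have hfib : ∀ x y : T, φ x = φ y → (x, y) ∈ a.carrier := by
    intro x y hxy
    have hten : Filter.Tendsto (fun h : G => ((ρ h x : T), (ρ h y : T))) ↑V
        (nhds (φ y, φ y)) := by
      have hpm := (hφ x).prodMk_nhds (hφ y)
      rwa [hxy] at hpm
    have hmem : {h : G | ((ρ h x : T), (ρ h y : T)) ∈ a.carrier} ∈ V :=
      hten (a.mem_nhds' (φ y))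
    obtain ⟨h, hh1, hh2⟩ := Filter.nonempty_of_mem (Filter.inter_mem hmem hHV)
    have heq := hfix h hh2
    rw [← heq] at hh1
    exact entMap_mem_of' hh1
  obtain ⟨x₀, y₀, -⟩ := hga.2
  by_cases h1 : ∀ z, φ z = φ x₀
  · refine hga.1 ⟨Set.univ, ∅, ?_, ?_, by simp⟩
    · intro x _ y _
      exact hfib x y ((h1 x).trans (h1 y).symm)
    · intro x hx
      exact absurd hx (Set.notMem_empty x)
  push_neg at h1
  obtain ⟨z₁, hz₁⟩ := h1
  by_cases h2 : ∀ z, φ z = φ x₀ ∨ φ z = φ z₁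
  · refine hga.1 ⟨{z | φ z = φ x₀}, {z | φ z = φ z₁}, ?_, ?_, ?_⟩
    · intro x hx y hy
      exact hfib x y (hx.trans hy.symm)
    · intro x hx y hy
      exact hfib x y (hx.trans hy.symm)
    · ext z
      simpa using h2 z
  push_neg at h2
  obtain ⟨z₂, hz₂a, hz₂b⟩ := h2
  refine flow_L1 ρ h3d V hco x₀ (φ x₀) z₁ (φ z₁) z₂ (φ z₂) ?_ ?_ ?_ (Ne.symm hz₁)
    (Ne.symm hz₂a) (Ne.symm hz₂b) ?_ ?_ ?_
  · exact fun h => hz₁ (congrArg φ h).symm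
  · exact fun h => hz₂a (congrArg φ h).symm
  · exact fun h => hz₂b (congrArg φ h).symm
  · intro o o' ho hpo ho' hq
    exact Filter.mem_of_superset (hφ x₀ (ho'.mem_nhds hq)) (fun g hg => ⟨x₀, hpo, hg⟩)
  · intro o o' ho hpo ho' hq
    exact Filter.mem_of_superset (hφ z₁ (ho'.mem_nhds hq)) (fun g hg => ⟨z₁, hpo, hg⟩)
  · intro o o' ho hpo ho' hq
    exact Filter.mem_of_superset (hφ z₂ (ho'.mem_nhds hq)) (fun g hg => ⟨z₂, hpo, hg⟩)

/-- Combinatorial structure lemma: if a relation contains the graph of `φ` and the reversed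
graph of `ψ` and admits no 3-matching, then `φ` and `ψ` are crosswise constant off single
exceptional points. -/
private lemma lemE' {T : Type*} (h3 : HasThreePts T) (Wrel : T → T → Prop) (φ ψ : T → T)
    (hWφ : ∀ u, Wrel u (φ u)) (hWψ : ∀ v, Wrel (ψ v) v)
    (hM : ∀ p₁ q₁ p₂ q₂ p₃ q₃, Wrel p₁ q₁ → Wrel p₂ q₂ → Wrel p₃ q₃ →
      p₁ ≠ p₂ → p₁ ≠ p₃ → p₂ ≠ p₃ → q₁ ≠ q₂ → q₁ ≠ q₃ → q₂ ≠ q₃ → False) :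
    ∃ r s : T, (∀ u, u ≠ r → φ u = s) ∧ (∀ v, v ≠ s → ψ v = r) := by
  classical
  by_cases hconst : ∀ u v, φ u = φ v
  · obtain ⟨x, y, z, hxy, hxz, hyz⟩ := id h3
    set s := φ x with hs
    have hφs : ∀ u, φ u = s := fun u => hconst u x
    have hpsi : ∀ v₁ v₂, v₁ ≠ s → v₂ ≠ s → ψ v₁ = ψ v₂ := by
      intro v₁ v₂ h1 h2
      by_contra hnev
      have hv12 : v₁ ≠ v₂ := fun h => hnev (h ▸ rfl)
      obtain ⟨u, hu1, hu2⟩ := exists_third' h3 (ψ v₁) (ψ v₂)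
      refine hM (ψ v₁) v₁ (ψ v₂) v₂ u (φ u) (hWψ v₁) (hWψ v₂) (hWφ u)
        hnev (Ne.symm hu1) (Ne.symm hu2) hv12 ?_ ?_
      · rw [hφs u]; exact h1
      · rw [hφs u]; exact h2
    obtain ⟨v₀, hv₀, -⟩ := exists_third' h3 s s
    exact ⟨ψ v₀, s, fun u _ => hφs u, fun v hv => hpsi v v₀ hv hv₀⟩
  · push_neg at hconst
    obtain ⟨u₀, v₀', hne0⟩ := hconst
    have hval : ∀ z, φ z = φ u₀ ∨ φ z = φ v₀' := by
      intro z
      by_contra hz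
      push_neg at hz
      refine hM u₀ (φ u₀) v₀' (φ v₀') z (φ z) (hWφ _) (hWφ _) (hWφ _)
        (fun h => hne0 (h ▸ rfl)) (fun h => hz.1 (congrArg φ h).symm)
        (fun h => hz.2 (congrArg φ h).symm) hne0 (Ne.symm hz.1) (Ne.symm hz.2)
    have aux : ∀ s_o s : T, s_o ≠ s → (∀ z, φ z = s_o ∨ φ z = s) →
        (∀ u₁ u₂, φ u₁ = s_o → φ u₂ = s_o → u₁ = u₂) →
        (∃ w₁ w₂, w₁ ≠ w₂ ∧ φ w₁ = s ∧ φ w₂ = s) → (∃ w, φ w = s_o) →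
        ∃ r s' : T, (∀ u, u ≠ r → φ u = s') ∧ (∀ v, v ≠ s' → ψ v = r) := by
      intro s_o s hos hval' hsmall hbig hex
      obtain ⟨r, hr⟩ := hex
      have huniq : ∀ u, u ≠ r → φ u = s := by
        intro u hu
        exact (hval' u).resolve_left (fun h => hu (hsmall u r h hr))
      have hA : ∀ v, v ≠ s → v ≠ s_o → ψ v = r := by
        intro v h1 h2
        by_contra ht
        obtain ⟨w₁, w₂, hw, hws1, hws2⟩ := hbig
        obtain ⟨u₂, hu₂s, hu₂t⟩ : ∃ u₂, φ u₂ = s ∧ u₂ ≠ ψ v := by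
          by_cases hcase : w₁ = ψ v
          · exact ⟨w₂, hws2, fun h => hw (hcase.trans h.symm)⟩
          · exact ⟨w₁, hws1, hcase⟩
        have hWr : Wrel r s_o := by rw [← hr]; exact hWφ r
        have hWu : Wrel u₂ s := by rw [← hu₂s]; exact hWφ u₂
        refine hM r s_o u₂ s (ψ v) v hWr hWu (hWψ v) ?_ ?_ ?_ hos (Ne.symm h2) (Ne.symm h1)
        · intro h
          exact hos (hr ▸ (h ▸ hu₂s) ▸ rfl)
        · exact fun h => ht h.symm
        · exact hu₂t
      have hB : ψ s_o = r := by
        by_contra hx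
        obtain ⟨v', hv1, hv2⟩ := exists_third' h3 s s_o
        have hrv' : ψ v' = r := hA v' hv1 hv2
        obtain ⟨w₁, w₂, hw, hws1, hws2⟩ := hbig
        obtain ⟨u₂, hu₂s, hu₂t⟩ : ∃ u₂, φ u₂ = s ∧ u₂ ≠ ψ s_o := by
          by_cases hcase : w₁ = ψ s_o
          · exact ⟨w₂, hws2, fun h => hw (hcase.trans h.symm)⟩
          · exact ⟨w₁, hws1, hcase⟩
        have hWu : Wrel u₂ s := by rw [← hu₂s]; exact hWφ u₂
        have hWr : Wrel r v' := by rw [← hrv']; exact hWψ v'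
        refine hM (ψ s_o) s_o u₂ s r v' (hWψ s_o) hWu hWr ?_ ?_ ?_ hos (Ne.symm hv2)
          (Ne.symm hv1)
        · exact fun h => hu₂t h.symm
        · exact hx
        · intro h
          exact hos (hr ▸ (h ▸ hu₂s) ▸ rfl)
      refine ⟨r, s, huniq, fun v hv => ?_⟩
      by_cases h2 : v = s_o
      · rw [h2]; exact hB
      · exact hA v hv h2
    by_cases hsm1 : ∀ u₁ u₂, φ u₁ = φ u₀ → φ u₂ = φ u₀ → u₁ = u₂
    · obtain ⟨x, y, z, hxy, hxz, hyz⟩ := id h3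
      have hbig2 : ∃ w₁ w₂, w₁ ≠ w₂ ∧ φ w₁ = φ v₀' ∧ φ w₂ = φ v₀' := by
        by_cases hx1 : φ x = φ u₀ <;> by_cases hy1 : φ y = φ u₀ <;>
          by_cases hz1 : φ z = φ u₀
        · exact absurd (hsm1 x y hx1 hy1) hxy
        · exact absurd (hsm1 x y hx1 hy1) hxy
        · exact absurd (hsm1 x z hx1 hz1) hxz
        · exact ⟨y, z, hyz, (hval y).resolve_left hy1, (hval z).resolve_left hz1⟩
        · exact absurd (hsm1 y z hy1 hz1) hyz
        · exact ⟨x, z, hxz, (hval x).resolve_left hx1, (hval z).resolve_left hz1⟩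
        · exact ⟨x, y, hxy, (hval x).resolve_left hx1, (hval y).resolve_left hy1⟩
        · exact ⟨x, y, hxy, (hval x).resolve_left hx1, (hval y).resolve_left hy1⟩
      exact aux (φ u₀) (φ v₀') hne0 hval hsm1 hbig2 ⟨u₀, rfl⟩
    push_neg at hsm1
    obtain ⟨w₁, w₂, hw₁, hw₂, hwne⟩ := hsm1
    by_cases hsm2 : ∀ u₁ u₂, φ u₁ = φ v₀' → φ u₂ = φ v₀' → u₁ = u₂
    · exact aux (φ v₀') (φ u₀) (Ne.symm hne0) (fun z => (hval z).symm) hsm2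
        ⟨w₁, w₂, hwne, hw₁, hw₂⟩ ⟨v₀', rfl⟩
    push_neg at hsm2
    obtain ⟨t₁, t₂, ht₁, ht₂, htne⟩ := hsm2
    exfalso
    obtain ⟨vv, hvv1, hvv2⟩ := exists_third' h3 (φ u₀) (φ v₀')
    obtain ⟨u₁, hu₁s, hu₁t⟩ : ∃ u₁, φ u₁ = φ u₀ ∧ u₁ ≠ ψ vv := by
      by_cases hcase : w₁ = ψ vv
      · exact ⟨w₂, hw₂, fun h => hwne (hcase.trans h.symm)⟩
      · exact ⟨w₁, hw₁, hcase⟩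
    obtain ⟨u₂, hu₂s, hu₂t⟩ : ∃ u₂, φ u₂ = φ v₀' ∧ u₂ ≠ ψ vv := by
      by_cases hcase : t₁ = ψ vv
      · exact ⟨t₂, ht₂, fun h => htne (hcase.trans h.symm)⟩
      · exact ⟨t₁, ht₁, hcase⟩
    have hWu₁ : Wrel u₁ (φ u₀) := by rw [← hu₁s]; exact hWφ u₁
    have hWu₂ : Wrel u₂ (φ v₀') := by rw [← hu₂s]; exact hWφ u₂
    refine hM u₁ (φ u₀) u₂ (φ v₀') (ψ vv) vv hWu₁ hWu₂ (hWψ vv) ?_ hu₁t hu₂t hne0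
      (Ne.symm hvv1) (Ne.symm hvv2)
    · intro h
      exact hne0 ((h ▸ hu₁s) ▸ hu₂s ▸ rfl)

private def otld {T : Type*} [TopologicalSpace T] (A : Set (Entourage T)) (o : Set T) :
    Set (T ⊕ ↥A) :=
  Sum.inl '' o ∪ Sum.inr '' {e : ↥A | eSmall (↑e) oᶜ}

private lemma isOpen_otld {T : Type*} [TopologicalSpace T] (A : Set (Entourage T)) (o : Set T)
    (ho : IsOpen o) : @IsOpen _ (tildeTop A) (otld A o) :=
  TopologicalSpace.isOpen_generateFrom_of_mem (Or.inr ⟨o, ho, rfl⟩)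

private lemma isOpen_inr_singleton {T : Type*} [TopologicalSpace T] (A : Set (Entourage T))
    (e : ↥A) : @IsOpen _ (tildeTop A) ({Sum.inr e} : Set (T ⊕ ↥A)) :=
  TopologicalSpace.isOpen_generateFrom_of_mem (Or.inl ⟨e, rfl⟩)

private lemma inl_mem_otld {T : Type*} [TopologicalSpace T] {A : Set (Entourage T)} {o : Set T}
    {t : T} : (Sum.inl t ∈ otld A o) ↔ t ∈ o := by
  simp [otld]

private lemma inr_mem_otld {T : Type*} [TopologicalSpace T] {A : Set (Entourage T)} {o : Set T}
    {e : ↥A} : (Sum.inr e ∈ otld A o) ↔ eSmall (↑e) oᶜ := by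
  simp [otld]

/-- If a group `G` acts 3-discontinuously on a compactum `T` and `A` is a discrete
`G`-finite (`G`-invariant) set of entourages of `T`, then the induced action of `G` on
`T̃ = T ⊔ A` is also 3-discontinuous. -/
theorem tilde_action_three_discontinuous {G : Type*} [Group G]
    {T : Type*} [TopologicalSpace T] [CompactSpace T] [T2Space T] (h3 : HasThreePts T)
    (ρ : G → T ≃ₜ T) (hρ : IsTopAction G T ρ)
    (h3d : ThreeDisc fun (g : G) (x : T) => ρ g x)
    (A : Set (Entourage T))
    (hgood : ∀ a ∈ A, GoodEnt a)
    (hdisc : DiscreteEnts A)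
    (hinv : ∀ g : G, ∀ a ∈ A, entMap (ρ g) a ∈ A)
    (hGfin : ∃ F : Set (Entourage T), F.Finite ∧ F ⊆ A ∧
      ∀ a ∈ A, ∃ g : G, ∃ b ∈ F, a = entMap (ρ g) b) :
    @ThreeDisc G (T ⊕ ↥A) (tildeTop A) (tildeAct ρ A hinv) := by
  classical
  letI tX : TopologicalSpace (T ⊕ ↥A) := tildeTop A
  intro K hK hsub
  by_contra hSfin
  set S : Set G := {g : G |
    (((fun x : (T ⊕ ↥A) × (T ⊕ ↥A) × (T ⊕ ↥A) =>
      (tildeAct ρ A hinv g x.1, tildeAct ρ A hinv g x.2.1, tildeAct ρ A hinv g x.2.2)) '' K)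
      ∩ K).Nonempty} with hSdef
  have hS : S.Infinite := hSfin
  obtain ⟨pt0, -, -, -⟩ := id h3
  have hwit : ∀ g : G, ∃ wg : (T ⊕ ↥A) × (T ⊕ ↥A) × (T ⊕ ↥A),
      g ∈ S → wg ∈ K ∧
        (tildeAct ρ A hinv g wg.1, tildeAct ρ A hinv g wg.2.1,
          tildeAct ρ A hinv g wg.2.2) ∈ K := by
    intro g
    by_cases hg : g ∈ S
    · obtain ⟨y, ⟨x, hxK, hxy⟩, hyK⟩ := hg
      subst hxy
      exact ⟨x, fun _ => ⟨hxK, hyK⟩⟩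
    · exact ⟨(Sum.inl pt0, Sum.inl pt0, Sum.inl pt0), fun h => absurd h hg⟩
  choose w hw using hwit
  haveI hneS : Filter.NeBot ((Filter.cofinite : Filter G) ⊓ Filter.principal S) :=
    hS.cofinite_inf_principal_neBot
  obtain ⟨U, hU⟩ := Ultrafilter.exists_le ((Filter.cofinite : Filter G) ⊓ Filter.principal S)
  have hco : ↑U ≤ (Filter.cofinite : Filter G) := hU.trans inf_le_left
  have hSU : S ∈ U := Filter.le_principal_iff.mp (hU.trans inf_le_right)
  -- limits of the witness triples
  have hKw : ↑(U.map w) ≤ Filter.principal K := by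
    rw [Ultrafilter.coe_map, Filter.le_principal_iff, Filter.mem_map]
    exact Filter.mem_of_superset hSU (fun g hg => (hw g hg).1)
  obtain ⟨ξ, hξK, hξle⟩ := hK.ultrafilter_le_nhds (U.map w) hKw
  have hξ : Filter.Tendsto w ↑U (nhds ξ) := by rwa [Ultrafilter.coe_map] at hξle
  have hKv : ↑(U.map (fun g => (tildeAct ρ A hinv g (w g).1, tildeAct ρ A hinv g (w g).2.1,
      tildeAct ρ A hinv g (w g).2.2))) ≤ Filter.principal K := by
    rw [Ultrafilter.coe_map, Filter.le_principal_iff, Filter.mem_map]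
    exact Filter.mem_of_superset hSU (fun g hg => (hw g hg).2)
  obtain ⟨η, hηK, hηle⟩ := hK.ultrafilter_le_nhds _ hKv
  have hη : Filter.Tendsto (fun g => (tildeAct ρ A hinv g (w g).1,
      tildeAct ρ A hinv g (w g).2.1, tildeAct ρ A hinv g (w g).2.2)) ↑U (nhds η) := by
    rwa [Ultrafilter.coe_map] at hηle
  have hw1 : Filter.Tendsto (fun g => (w g).1) ↑U (nhds ξ.1) :=
    (continuous_fst.tendsto ξ).comp hξ
  have hw2 : Filter.Tendsto (fun g => (w g).2.1) ↑U (nhds ξ.2.1) :=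
    ((continuous_fst.comp continuous_snd).tendsto ξ).comp hξ
  have hw3 : Filter.Tendsto (fun g => (w g).2.2) ↑U (nhds ξ.2.2) :=
    ((continuous_snd.comp continuous_snd).tendsto ξ).comp hξ
  have hv1 : Filter.Tendsto (fun g => tildeAct ρ A hinv g ((w g).1)) ↑U (nhds η.1) :=
    (continuous_fst.tendsto η).comp hη
  have hv2 : Filter.Tendsto (fun g => tildeAct ρ A hinv g ((w g).2.1)) ↑U (nhds η.2.1) :=
    ((continuous_fst.comp continuous_snd).tendsto η).comp hη
  have hv3 : Filter.Tendsto (fun g => tildeAct ρ A hinv g ((w g).2.2)) ↑U (nhds η.2.2) :=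
    ((continuous_snd.comp continuous_snd).tendsto η).comp hη
  -- pointwise limit maps on T
  choose φ hφ using fun u : T => exists_ultra_tendsto' U (fun g : G => (ρ g u : T))
  choose ψ hψ using fun u : T => exists_ultra_tendsto' U (fun g : G => ((ρ g).symm u : T))
  have hWφ : ∀ u : T, ∀ o o' : Set T, IsOpen o → u ∈ o → IsOpen o' → φ u ∈ o' →
      {g : G | ∃ x, x ∈ o ∧ ρ g x ∈ o'} ∈ U := by
    intro u o o' ho hpo ho' hq
    exact Filter.mem_of_superset (hφ u (ho'.mem_nhds hq)) (fun g hg => ⟨u, hpo, hg⟩)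
  have hWψ : ∀ vv : T, ∀ o o' : Set T, IsOpen o → ψ vv ∈ o → IsOpen o' → vv ∈ o' →
      {g : G | ∃ x, x ∈ o ∧ ρ g x ∈ o'} ∈ U := by
    intro vv o o' ho hpo ho' hq
    refine Filter.mem_of_superset (hψ vv (ho.mem_nhds hpo))
      (fun g hg => ⟨(ρ g).symm vv, hg, ?_⟩)
    simpa using hq
  obtain ⟨r, s, hrs1, hrs2⟩ := lemE' h3
    (fun p q => ∀ o o' : Set T, IsOpen o → p ∈ o → IsOpen o' → q ∈ o' →
      {g : G | ∃ x, x ∈ o ∧ ρ g x ∈ o'} ∈ U) φ ψ hWφ hWψ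
    (fun p₁ q₁ p₂ q₂ p₃ q₃ hw1' hw2' hw3' hp12 hp13 hp23 hq12 hq13 hq23 =>
      flow_L1 ρ h3d U hco p₁ q₁ p₂ q₂ p₃ q₃ hp12 hp13 hp23 hq12 hq13 hq23 hw1' hw2' hw3')
  -- the coordinate dichotomy
  have coord : ∀ (c : G → T ⊕ ↥A) (ξ₀ η₀ : T ⊕ ↥A),
      Filter.Tendsto c ↑U (nhds ξ₀) →
      Filter.Tendsto (fun g => tildeAct ρ A hinv g (c g)) ↑U (nhds η₀) →
      ξ₀ = Sum.inl r ∨ η₀ = Sum.inl s := by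
    intro c ξ₀ η₀ hc hd
    rcases ξ₀ with p | ea
    · rcases η₀ with q | eb
      · -- both coordinates converge to points of T
        have hWpq : ∀ o o' : Set T, IsOpen o → p ∈ o → IsOpen o' → q ∈ o' →
            {g : G | ∃ x, x ∈ o ∧ ρ g x ∈ o'} ∈ U := by
          intro o o' ho hpo ho' hqo'
          have h1 : {g : G | c g ∈ otld A o} ∈ U :=
            tendsto_mem_ultra' hc (isOpen_otld A o ho) (inl_mem_otld.mpr hpo)
          have h2 : {g : G | tildeAct ρ A hinv g (c g) ∈ otld A o'} ∈ U :=
            tendsto_mem_ultra' hd (isOpen_otld A o' ho') (inl_mem_otld.mpr hqo')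
          refine Filter.mem_of_superset (Filter.inter_mem h1 h2) ?_
          rintro g ⟨hg1, hg2⟩
          simp only [Set.mem_setOf_eq] at hg1 hg2
          rcases hcg : c g with t | e
          · rw [hcg] at hg1 hg2
            have hact : tildeAct ρ A hinv g (Sum.inl t) = Sum.inl ((ρ g t : T)) := rfl
            rw [hact] at hg2
            exact ⟨t, inl_mem_otld.mp hg1, inl_mem_otld.mp hg2⟩
          · rw [hcg] at hg1 hg2
            have he1 : eSmall (↑e) oᶜ := inr_mem_otld.mp hg1
            have hact : tildeAct ρ A hinv g (Sum.inr e) =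
                Sum.inr (⟨entMap (ρ g) ↑e, hinv g ↑e e.2⟩ : ↥A) := rfl
            rw [hact] at hg2
            have he2 : eSmall (entMap (ρ g) ↑e) o'ᶜ := inr_mem_otld.mp hg2
            show ∃ x, x ∈ o ∧ ρ g x ∈ o'
            by_contra hno
            push_neg at hno
            refine (hgood ↑e e.2).1 ⟨oᶜ, {x | ρ g x ∈ o'ᶜ}, he1, ?_, ?_⟩
            · intro x hx y hy
              exact entMap_mem_of' (he2 (ρ g x) hx (ρ g y) hy)
            · ext z
              simp only [Set.mem_union, Set.mem_compl_iff, Set.mem_setOf_eq, Set.mem_univ,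
                iff_true]
              by_cases hz : z ∈ o
              · exact Or.inr (hno z hz)
              · exact Or.inl hz
        by_cases hpr : p = r
        · exact Or.inl (by rw [hpr])
        by_cases hqs : q = s
        · exact Or.inr (by rw [hqs])
        exfalso
        obtain ⟨z, hz1, hz2⟩ := exists_third' h3 q s
        obtain ⟨u, hu1, hu2⟩ := exists_third' h3 p r
        have hWrz : ∀ o o' : Set T, IsOpen o → r ∈ o → IsOpen o' → z ∈ o' →
            {g : G | ∃ x, x ∈ o ∧ ρ g x ∈ o'} ∈ U := by
          have h := hWψ z
          rwa [hrs2 z hz2] at h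
        have hWus : ∀ o o' : Set T, IsOpen o → u ∈ o → IsOpen o' → s ∈ o' →
            {g : G | ∃ x, x ∈ o ∧ ρ g x ∈ o'} ∈ U := by
          have h := hWφ u
          rwa [hrs1 u hu2] at h
        exact flow_L1 ρ h3d U hco p q r z u s hpr (Ne.symm hu1) (Ne.symm hu2)
          (Ne.symm hz1) hqs hz2 hWpq hWrz hWus
      · -- point source, entourage target: the source must be the exceptional point r
        left
        have hp : p = r := by
          by_contra hpr
          have hsmallM : eSmall (↑eb) {y : T | ψ y ≠ p} := by
            intro x hx y hy
            simp only [Set.mem_setOf_eq] at hx hy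
            obtain ⟨Ox, Vx, hOx, hVx, hxO, hpVx, hdx⟩ := t2_separation hx
            obtain ⟨Oy, Vy, hOy, hVy, hyO, hpVy, hdy⟩ := t2_separation hy
            have h1 : {g : G | c g ∈ otld A (Vx ∩ Vy)} ∈ U :=
              tendsto_mem_ultra' hc (isOpen_otld A _ (hVx.inter hVy))
                (inl_mem_otld.mpr ⟨hpVx, hpVy⟩)
            have h2 : {g : G | tildeAct ρ A hinv g (c g) ∈
                ({Sum.inr eb} : Set (T ⊕ ↥A))} ∈ U :=
              tendsto_mem_ultra' hd (isOpen_inr_singleton A eb) rfl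
            have h3' : {g : G | ((ρ g).symm x : T) ∈ Ox} ∈ U :=
              tendsto_mem_ultra' (hψ x) hOx hxO
            have h4 : {g : G | ((ρ g).symm y : T) ∈ Oy} ∈ U :=
              tendsto_mem_ultra' (hψ y) hOy hyO
            obtain ⟨g, hg1, hg2, hg3, hg4⟩ := Filter.nonempty_of_mem
              (Filter.inter_mem h1 (Filter.inter_mem h2 (Filter.inter_mem h3' h4)))
            simp only [Set.mem_setOf_eq] at hg1 hg2 hg3 hg4
            rcases hcg : c g with t | e
            · rw [hcg] at hg2
              exact absurd hg2 (by simp [tildeAct])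
            · rw [hcg] at hg1 hg2
              have hsm : eSmall (↑e) (Vx ∩ Vy)ᶜ := inr_mem_otld.mp hg1
              have hact : tildeAct ρ A hinv g (Sum.inr e) =
                  Sum.inr (⟨entMap (ρ g) ↑e, hinv g ↑e e.2⟩ : ↥A) := rfl
              rw [hact] at hg2
              have heq : entMap (ρ g) ↑e = ↑eb :=
                congrArg Subtype.val (Sum.inr.inj (Set.mem_singleton_iff.mp hg2))
              have hxc : ((ρ g).symm x : T) ∈ (Vx ∩ Vy)ᶜ := fun hmem =>
                Set.disjoint_left.mp hdx hg3 hmem.1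
              have hyc : ((ρ g).symm y : T) ∈ (Vx ∩ Vy)ᶜ := fun hmem =>
                Set.disjoint_left.mp hdy hg4 hmem.2
              have hxy : (x, y) ∈ (entMap (ρ g) ↑e).carrier := hsm _ hxc _ hyc
              rwa [heq] at hxy
          have hsing : eSmall (↑eb) {s} := by
            intro x hx y hy
            simp only [Set.mem_singleton_iff] at hx hy
            rw [hx, hy]
            exact mem_of_mem_nhds ((↑eb : Entourage T).mem_nhds' s)
          have hcover : {y : T | ψ y ≠ p} ∪ {s} = Set.univ := by
            ext z
            simp only [Set.mem_union, Set.mem_setOf_eq, Set.mem_singleton_iff, Set.mem_univ,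
              iff_true]
            by_cases hzz : ψ z = p
            · right
              by_contra hzs
              exact hpr (hzz.symm.trans (hrs2 z hzs))
            · exact Or.inl hzz
          exact (hgood ↑eb eb.2).1 ⟨{y : T | ψ y ≠ p}, {s}, hsmallM, hsing, hcover⟩
        rw [hp]
    · rcases η₀ with q | eb
      · -- entourage source, point target: the target must be the exceptional point s
        right
        have hq : q = s := by
          by_contra hqs
          have hsmallN : eSmall (↑ea) {z : T | φ z ≠ q} := by
            intro x hx y hy
            simp only [Set.mem_setOf_eq] at hx hy
            obtain ⟨Ox, Vx, hOx, hVx, hxO, hqVx, hdx⟩ := t2_separation hx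
            obtain ⟨Oy, Vy, hOy, hVy, hyO, hqVy, hdy⟩ := t2_separation hy
            have h1 : {g : G | c g ∈ ({Sum.inr ea} : Set (T ⊕ ↥A))} ∈ U :=
              tendsto_mem_ultra' hc (isOpen_inr_singleton A ea) rfl
            have h2 : {g : G | tildeAct ρ A hinv g (c g) ∈ otld A (Vx ∩ Vy)} ∈ U :=
              tendsto_mem_ultra' hd (isOpen_otld A _ (hVx.inter hVy))
                (inl_mem_otld.mpr ⟨hqVx, hqVy⟩)
            have h3' : {g : G | (ρ g x : T) ∈ Ox} ∈ U := tendsto_mem_ultra' (hφ x) hOx hxO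
            have h4 : {g : G | (ρ g y : T) ∈ Oy} ∈ U := tendsto_mem_ultra' (hφ y) hOy hyO
            obtain ⟨g, hg1, hg2, hg3, hg4⟩ := Filter.nonempty_of_mem
              (Filter.inter_mem h1 (Filter.inter_mem h2 (Filter.inter_mem h3' h4)))
            simp only [Set.mem_setOf_eq] at hg1 hg2 hg3 hg4
            have hcg : c g = Sum.inr ea := hg1
            rw [hcg] at hg2
            have hact : tildeAct ρ A hinv g (Sum.inr ea) =
                Sum.inr (⟨entMap (ρ g) ↑ea, hinv g ↑ea ea.2⟩ : ↥A) := rfl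
            rw [hact] at hg2
            have hsm : eSmall (entMap (ρ g) ↑ea) (Vx ∩ Vy)ᶜ := inr_mem_otld.mp hg2
            have hxc : (ρ g x : T) ∈ (Vx ∩ Vy)ᶜ := fun hmem =>
              Set.disjoint_left.mp hdx hg3 hmem.1
            have hyc : (ρ g y : T) ∈ (Vx ∩ Vy)ᶜ := fun hmem =>
              Set.disjoint_left.mp hdy hg4 hmem.2
            exact entMap_mem_of' (hsm _ hxc _ hyc)
          have hsing : eSmall (↑ea) {r} := by
            intro x hx y hy
            simp only [Set.mem_singleton_iff] at hx hy
            rw [hx, hy]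
            exact mem_of_mem_nhds ((↑ea : Entourage T).mem_nhds' r)
          have hcover : {z : T | φ z ≠ q} ∪ {r} = Set.univ := by
            ext z
            simp only [Set.mem_union, Set.mem_setOf_eq, Set.mem_singleton_iff, Set.mem_univ,
              iff_true]
            by_cases hzz : φ z = q
            · right
              by_contra hzr
              exact hqs (hzz.symm.trans (hrs1 z hzr))
            · exact Or.inl hzz
          exact (hgood ↑ea ea.2).1 ⟨{z : T | φ z ≠ q}, {r}, hsmallN, hsing, hcover⟩
        rw [hq]
      · -- both coordinates are entourages: infinite "stabilizer", impossible
        exfalso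
        have h1 : {g : G | c g ∈ ({Sum.inr ea} : Set (T ⊕ ↥A))} ∈ U :=
          tendsto_mem_ultra' hc (isOpen_inr_singleton A ea) rfl
        have h2 : {g : G | tildeAct ρ A hinv g (c g) ∈ ({Sum.inr eb} : Set (T ⊕ ↥A))} ∈ U :=
          tendsto_mem_ultra' hd (isOpen_inr_singleton A eb) rfl
        have hE : ({g : G | c g ∈ ({Sum.inr ea} : Set (T ⊕ ↥A))} ∩
            {g : G | tildeAct ρ A hinv g (c g) ∈ ({Sum.inr eb} : Set (T ⊕ ↥A))}) ∈ U :=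
          Filter.inter_mem h1 h2
        have hEmap : ∀ g ∈ ({g : G | c g ∈ ({Sum.inr ea} : Set (T ⊕ ↥A))} ∩
            {g : G | tildeAct ρ A hinv g (c g) ∈ ({Sum.inr eb} : Set (T ⊕ ↥A))}),
            entMap (ρ g) ↑ea = ↑eb := by
          rintro g ⟨hg1, hg2⟩
          simp only [Set.mem_setOf_eq] at hg1 hg2
          have hcg : c g = Sum.inr ea := hg1
          rw [hcg] at hg2
          have hact : tildeAct ρ A hinv g (Sum.inr ea) =
              Sum.inr (⟨entMap (ρ g) ↑ea, hinv g ↑ea ea.2⟩ : ↥A) := rfl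
          rw [hact] at hg2
          exact congrArg Subtype.val (Sum.inr.inj (Set.mem_singleton_iff.mp hg2))
        have hEinf : ({g : G | c g ∈ ({Sum.inr ea} : Set (T ⊕ ↥A))} ∩
            {g : G | tildeAct ρ A hinv g (c g) ∈
              ({Sum.inr eb} : Set (T ⊕ ↥A))}).Infinite := by
          intro hfin
          have hmem := Filter.inter_mem hE (hco hfin.compl_mem_cofinite)
          obtain ⟨g, hg1, hg2⟩ := Filter.nonempty_of_mem hmem
          exact hg2 hg1
        obtain ⟨g₀, hg₀⟩ := hEinf.nonempty
        have hfix : ∀ h ∈ (fun g => g₀⁻¹ * g) '' ({g : G | c g ∈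
            ({Sum.inr ea} : Set (T ⊕ ↥A))} ∩ {g : G | tildeAct ρ A hinv g (c g) ∈
            ({Sum.inr eb} : Set (T ⊕ ↥A))}), entMap (ρ h) ↑ea = ↑ea := by
          rintro h ⟨g, hgE, rfl⟩
          have e1 : entMap (ρ g) ↑ea = ↑eb := hEmap g hgE
          have e0 : entMap (ρ g₀) ↑ea = ↑eb := hEmap g₀ hg₀
          have hmul : ρ (g₀⁻¹ * g) = (ρ g).trans (ρ g₀⁻¹) := hρ.map_mul g₀⁻¹ g
          rw [hmul, ← entMap_trans', e1, ← e0, entMap_trans', ← hρ.map_mul, inv_mul_cancel,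
            hρ.map_one, entMap_refl']
        have hHinf : ((fun g => g₀⁻¹ * g) '' ({g : G | c g ∈
            ({Sum.inr ea} : Set (T ⊕ ↥A))} ∩ {g : G | tildeAct ρ A hinv g (c g) ∈
            ({Sum.inr eb} : Set (T ⊕ ↥A))})).Infinite :=
          hEinf.image ((mul_right_injective g₀⁻¹).injOn)
        exact stab_contra' ρ h3d ↑ea (hgood ↑ea ea.2) _ hHinf hfix
  have hd1 := coord (fun g => (w g).1) ξ.1 η.1 hw1 hv1
  have hd2 := coord (fun g => (w g).2.1) ξ.2.1 η.2.1 hw2 hv2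
  have hd3 := coord (fun g => (w g).2.2) ξ.2.2 η.2.2 hw3 hv3
  obtain ⟨hx1, hx2, hx3⟩ := hsub hξK
  obtain ⟨hy1, hy2, hy3⟩ := hsub hηK
  rcases hd1 with h1 | h1 <;> rcases hd2 with h2 | h2 <;> rcases hd3 with h3' | h3' <;>
    first
      | exact hx1 (h1.trans h2.symm)
      | exact hx2 (h1.trans h3'.symm)
      | exact hx3 (h2.trans h3'.symm)
      | exact hy1 (h1.trans h2.symm)
      | exact hy2 (h1.trans h3'.symm)
      | exact hy3 (h2.trans h3'.symm)


end RHG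
end

section
/- Let B be an infinite subset of A and let C = N_d(B) be the d-neighborhood of B in the graph of entourages Γ (with respect to d_A), for some d > 0. Then the topological boundaries (sets of accumulation points in T̃ = T ⊔ A) of B and of C coincide. In particular, if (b_n) and (c_n) are two sequences in A with d_A(b_n, c_n) uniformly bounded, then (b_n) converges to a point p ∈ T if and only if (c_n) converges to p. -/
namespace RHG

section Aux

variable {T : Type*} [TopologicalSpace T]

lemma eSmall_mono {e : Entourage T} {s t : Set T} (h : t ⊆ s) (hs : eSmall e s) :
    eSmall e t := fun x hx y hy => hs x (h hx) y (h hy)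

lemma entLinked_symm {a b : Entourage T} (h : EntLinked a b) : EntLinked b a := by
  rintro ⟨sb, sa, hb, ha, huniv⟩
  exact h ⟨sa, sb, ha, hb, by rw [Set.union_comm]; exact huniv⟩

lemma adistLE_symm {A : Set (Entourage T)} {n : ℕ} {a b : Entourage T}
    (h : AdistLE A n a b) : AdistLE A n b a := by
  obtain ⟨c, h0, hn, hmem, hlink⟩ := h
  refine ⟨fun i => c (n - i), by simpa using hn, by simpa using h0,
    fun i _ => hmem _ (by omega), ?_⟩
  intro i hi
  have hj : n - i = n - (i + 1) + 1 := by omega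
  have hl := entLinked_symm (hlink (n - (i + 1)) (by omega))
  rw [← hj] at hl
  exact hl

lemma adistLE_refl {A : Set (Entourage T)} (n : ℕ) {a : Entourage T}
    (ha : a ∈ A) (hl : EntLinked a a) : AdistLE A n a a :=
  ⟨fun _ => a, rfl, rfl, fun _ _ => ha, fun _ _ => hl⟩

variable [CompactSpace T] [T2Space T]

lemma exists_nbhd_not_small {a : Entourage T} (hga : GoodEnt a) (p : T) :
    ∃ o : Set T, IsOpen o ∧ p ∈ o ∧ ¬ eSmall a oᶜ := by
  by_contra h
  push_neg at h
  apply hga.1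
  refine ⟨{p}ᶜ, {p}, ?_, ?_, Set.compl_union_self {p}⟩
  · intro x hx y hy
    have hox : IsOpen ({x}ᶜ ∩ {y}ᶜ : Set T) :=
      isClosed_singleton.isOpen_compl.inter isClosed_singleton.isOpen_compl
    have hp : p ∈ ({x}ᶜ ∩ {y}ᶜ : Set T) := by
      constructor
      · simpa using fun hpx => hx (by simp [hpx])
      · simpa using fun hpy => hy (by simp [hpy])
    exact h _ hox hp x (by simp) y (by simp)
  · intro x hx y hy
    rw [Set.mem_singleton_iff] at hx hy
    rw [hx, hy]
    exact mem_of_mem_nhds (a.mem_nhds' p)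

lemma exists_avoid (A : Set (Entourage T)) (hgood : ∀ a ∈ A, GoodEnt a)
    (hdisc : DiscreteEnts A) (p : T) (b : Entourage T) :
    ∃ o : Set T, IsOpen o ∧ p ∈ o ∧ ∀ a ∈ A, eSmall a oᶜ → ¬ EntLinked a b := by
  have hfin : {a ∈ A | EntLinked a b}.Finite := hdisc b
  have key : ∀ a ∈ {a ∈ A | EntLinked a b}, ∃ o : Set T, IsOpen o ∧ p ∈ o ∧ ¬ eSmall a oᶜ :=
    fun a ha => exists_nbhd_not_small (hgood a ha.1) p
  choose! f hfo hfp hfn using key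
  refine ⟨⋂ a ∈ {a ∈ A | EntLinked a b}, f a, hfin.isOpen_biInter hfo,
    Set.mem_biInter hfp, ?_⟩
  intro a ha hsmall hlink
  have hmem : a ∈ {a ∈ A | EntLinked a b} := ⟨ha, hlink⟩
  exact hfn a hmem
    (eSmall_mono (Set.compl_subset_compl.mpr (Set.biInter_subset_of_mem hmem)) hsmall)

lemma key_step (A : Set (Entourage T)) (hgood : ∀ a ∈ A, GoodEnt a)
    (hdisc : DiscreteEnts A) (p : T) (u : Set T) (hu : IsOpen u) (hpu : p ∈ u) :
    ∃ o : Set T, IsOpen o ∧ p ∈ o ∧ o ⊆ u ∧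
      ∀ a ∈ A, eSmall a oᶜ → ∀ b ∈ A, EntLinked a b → eSmall b uᶜ := by
  obtain ⟨P, hPo, hPp, hPu⟩ :=
    normal_exists_closure_subset isClosed_singleton hu (Set.singleton_subset_iff.mpr hpu)
  have hPp' : p ∈ P := hPp rfl
  obtain ⟨M, hMo, hMsub, hMcl⟩ :=
    normal_exists_closure_subset hu.isClosed_compl isClosed_closure.isOpen_compl
      (Set.compl_subset_compl.mpr hPu)
  -- the entourage w avoiding (closure M) × (closure P) pairs
  set W : Set (T × T) := (closure M ×ˢ closure P ∪ closure P ×ˢ closure M)ᶜ with hW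
  have hWdiag : ∀ x : T, (x, x) ∈ W := by
    intro x hx
    rcases hx with hx | hx
    · exact hMcl hx.1 hx.2
    · exact hMcl hx.2 hx.1
  have hWopen : IsOpen W :=
    (((isClosed_closure.prod isClosed_closure).union
      (isClosed_closure.prod isClosed_closure))).isOpen_compl
  set w : Entourage T :=
    { carrier := W
      symm' := by
        intro x y h hc
        apply h
        rcases hc with hc | hc
        · exact Or.inr ⟨hc.2, hc.1⟩
        · exact Or.inl ⟨hc.2, hc.1⟩
      mem_nhds' := fun x => hWopen.mem_nhds (hWdiag x) } with hwdef
  have claim : ∀ b ∈ A, ¬ eSmall b uᶜ →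
      (∃ a ∈ A, eSmall a Pᶜ ∧ EntLinked a b) → EntLinked b w := by
    rintro b _ hbns ⟨a, haA, haP, hab⟩ hunl
    obtain ⟨b₀, w₀, hb₀, hw₀, hcov⟩ := hunl
    rw [eSmall] at hbns
    push_neg at hbns
    obtain ⟨x, hx, y, hy, hxy⟩ := hbns
    have hne : Pᶜ ∪ b₀ ≠ Set.univ := fun hq => hab ⟨Pᶜ, b₀, haP, hb₀, hq⟩
    obtain ⟨q, hq⟩ := Set.ne_univ_iff_exists_notMem _ |>.mp hne
    have hqP : q ∈ P := by
      by_contra hqP; exact hq (Or.inl hqP)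
    have hqb₀ : q ∉ b₀ := fun h => hq (Or.inr h)
    have hqw₀ : q ∈ w₀ := by
      have := Set.eq_univ_iff_forall.mp hcov q
      rcases this with h | h
      · exact absurd h hqb₀
      · exact h
    -- one of x, y is not in b₀
    have hz : ∃ z ∈ uᶜ, z ∈ w₀ := by
      by_cases hxb : x ∈ b₀
      · by_cases hyb : y ∈ b₀
        · exact absurd (hb₀ x hxb y hyb) hxy
        · refine ⟨y, hy, ?_⟩
          rcases Set.eq_univ_iff_forall.mp hcov y with h | h
          · exact absurd h hyb
          · exact h
      · refine ⟨x, hx, ?_⟩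
        rcases Set.eq_univ_iff_forall.mp hcov x with h | h
        · exact absurd h hxb
        · exact h
    obtain ⟨z, hzu, hzw₀⟩ := hz
    have : (z, q) ∈ w.carrier := hw₀ z hzw₀ q hqw₀
    exact this (Or.inl ⟨subset_closure (hMsub hzu), subset_closure hqP⟩)
  have hfin : {b ∈ A | EntLinked b w}.Finite := by
    have := hdisc w
    exact this.subset (fun b hb => ⟨hb.1, hb.2⟩)
  have key2 : ∀ b ∈ {b ∈ A | EntLinked b w},
      ∃ o : Set T, IsOpen o ∧ p ∈ o ∧ ∀ a ∈ A, eSmall a oᶜ → ¬ EntLinked a b :=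
    fun b _ => exists_avoid A hgood hdisc p b
  choose! g hgo hgp hgn using key2
  refine ⟨P ∩ ⋂ b ∈ {b ∈ A | EntLinked b w}, g b,
    hPo.inter (hfin.isOpen_biInter hgo), ⟨hPp', Set.mem_biInter hgp⟩,
    (Set.inter_subset_left).trans (subset_closure.trans hPu), ?_⟩
  intro a haA hsm b hbA hab
  by_contra hbns
  have haP : eSmall a Pᶜ :=
    eSmall_mono (Set.compl_subset_compl.mpr Set.inter_subset_left) hsm
  have hbw : EntLinked b w := claim b hbA hbns ⟨a, haA, haP, hab⟩
  have hbmem : b ∈ {b ∈ A | EntLinked b w} := ⟨hbA, hbw⟩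
  have hsub : (g b)ᶜ ⊆ (P ∩ ⋂ b ∈ {b ∈ A | EntLinked b w}, g b)ᶜ :=
    Set.compl_subset_compl.mpr
      ((Set.inter_subset_right).trans (Set.biInter_subset_of_mem hbmem))
  exact hgn b hbmem a haA (eSmall_mono hsub hsm) hab

lemma key_iter (A : Set (Entourage T)) (hgood : ∀ a ∈ A, GoodEnt a)
    (hdisc : DiscreteEnts A) (p : T) :
    ∀ (d : ℕ) (u : Set T), IsOpen u → p ∈ u →
      ∃ o : Set T, IsOpen o ∧ p ∈ o ∧ o ⊆ u ∧
        ∀ a ∈ A, eSmall a oᶜ → ∀ b, AdistLE A d a b → eSmall b uᶜ := by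
  intro d
  induction d with
  | zero =>
    intro u hu hpu
    refine ⟨u, hu, hpu, subset_rfl, ?_⟩
    intro a _ hsm b hab
    obtain ⟨c, h0, hn, -, -⟩ := hab
    have hba : a = b := h0 ▸ hn
    exact hba ▸ hsm
  | succ d ih =>
    intro u hu hpu
    obtain ⟨o₁, ho₁, hpo₁, ho₁u, H₁⟩ := ih u hu hpu
    obtain ⟨o, ho, hpo, hoo₁, H⟩ := key_step A hgood hdisc p o₁ ho₁ hpo₁
    refine ⟨o, ho, hpo, hoo₁.trans ho₁u, ?_⟩
    intro a ha hsm b hab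
    obtain ⟨c, h0, hn, hmem, hlink⟩ := hab
    have hc1A : c 1 ∈ A := hmem 1 (by omega)
    have hlk : EntLinked a (c 1) := h0 ▸ hlink 0 (by omega)
    have hsm1 : eSmall (c 1) o₁ᶜ := H a ha hsm (c 1) hc1A hlk
    exact H₁ (c 1) hc1A hsm1 b
      ⟨fun i => c (i + 1), rfl, hn, fun i hi => hmem (i + 1) (by omega),
        fun i hi => hlink (i + 1) (by omega)⟩

end Aux

section Top

variable {T : Type*} [TopologicalSpace T]

/-- The basic open hull of an open set of `T` in `T̃`. -/
def hull (A : Set (Entourage T)) (o : Set T) : Set (T ⊕ ↥A) :=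
  Sum.inl '' o ∪ Sum.inr '' {e : ↥A | eSmall (↑e) oᶜ}

lemma hull_mono {A : Set (Entourage T)} {o o' : Set T} (h : o ⊆ o') :
    hull A o ⊆ hull A o' := by
  rintro x (⟨t, ht, rfl⟩ | ⟨e, he, rfl⟩)
  · exact Or.inl ⟨t, h ht, rfl⟩
  · exact Or.inr ⟨e, eSmall_mono (Set.compl_subset_compl.mpr h) he, rfl⟩

lemma inr_mem_hull {A : Set (Entourage T)} {e : ↥A} {o : Set T} :
    Sum.inr e ∈ hull A o ↔ eSmall (↑e) oᶜ := by
  constructor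
  · rintro (⟨t, -, h⟩ | ⟨f, hf, h⟩)
    · exact absurd h (by simp)
    · obtain rfl := Sum.inr.inj h
      exact hf
  · intro h; exact Or.inr ⟨e, h, rfl⟩

lemma hull_isOpen {A : Set (Entourage T)} {o : Set T} (ho : IsOpen o) :
    @IsOpen _ (tildeTop A) (hull A o) :=
  TopologicalSpace.GenerateOpen.basic _ (Or.inr ⟨o, ho, rfl⟩)

lemma singleton_inr_isOpen {A : Set (Entourage T)} (e : ↥A) :
    @IsOpen _ (tildeTop A) ({Sum.inr e} : Set (T ⊕ ↥A)) :=
  TopologicalSpace.GenerateOpen.basic _ (Or.inl ⟨e, rfl⟩)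

lemma tilde_basis {A : Set (Entourage T)} {U : Set (T ⊕ ↥A)}
    (hU : @IsOpen _ (tildeTop A) U) :
    ∀ p : T, Sum.inl p ∈ U → ∃ o : Set T, IsOpen o ∧ p ∈ o ∧ hull A o ⊆ U := by
  change TopologicalSpace.GenerateOpen _ U at hU
  induction hU with
  | basic s hs =>
    intro p hp
    rcases hs with ⟨e, rfl⟩ | ⟨o, ho, rfl⟩
    · exact absurd hp (by simp)
    · refine ⟨o, ho, ?_, subset_rfl⟩
      rcases hp with ⟨t, ht, hte⟩ | ⟨f, -, hfe⟩
      · obtain rfl := Sum.inl.inj hte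
        exact ht
      · exact absurd hfe (by simp)
  | univ =>
    intro p _
    exact ⟨Set.univ, isOpen_univ, trivial, Set.subset_univ _⟩
  | inter s t _ _ ihs iht =>
    intro p hp
    obtain ⟨o₁, ho₁, hpo₁, hs₁⟩ := ihs p hp.1
    obtain ⟨o₂, ho₂, hpo₂, hs₂⟩ := iht p hp.2
    exact ⟨o₁ ∩ o₂, ho₁.inter ho₂, ⟨hpo₁, hpo₂⟩,
      fun x hx => ⟨hs₁ (hull_mono Set.inter_subset_left hx),
        hs₂ (hull_mono Set.inter_subset_right hx)⟩⟩
  | sUnion S _ ih =>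
    intro p hp
    obtain ⟨s, hsS, hps⟩ := hp
    obtain ⟨o, ho, hpo, hsub⟩ := ih s hsS p hps
    exact ⟨o, ho, hpo, fun x hx => ⟨s, hsS, hsub hx⟩⟩

lemma inl_mem_closure_iff {A : Set (Entourage T)} {S' : Set ↥A} {p : T} :
    Sum.inl p ∈ @closure _ (tildeTop A) (Sum.inr '' S') ↔
      ∀ o : Set T, IsOpen o → p ∈ o → ∃ e ∈ S', eSmall (↑e) oᶜ := by
  letI := tildeTop A
  rw [mem_closure_iff]
  constructor
  · intro h o ho hpo
    obtain ⟨x, hx1, hx2⟩ := h (hull A o) (hull_isOpen ho) (Or.inl ⟨p, hpo, rfl⟩)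
    obtain ⟨e, heS, rfl⟩ := hx2
    exact ⟨e, heS, inr_mem_hull.mp hx1⟩
  · intro h U hUopen hpU
    obtain ⟨o, ho, hpo, hsub⟩ := tilde_basis hUopen p hpU
    obtain ⟨e, heS, hsm⟩ := h o ho hpo
    exact ⟨Sum.inr e, hsub (inr_mem_hull.mpr hsm), ⟨e, heS, rfl⟩⟩

lemma inl_mem_accPts_iff {A : Set (Entourage T)} {S' : Set ↥A} {p : T} :
    Sum.inl p ∈ @accPts _ (tildeTop A) (Sum.inr '' S') ↔
      ∀ o : Set T, IsOpen o → p ∈ o → ∃ e ∈ S', eSmall (↑e) oᶜ := by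
  letI := tildeTop A
  have hd : (Sum.inr '' S' : Set (T ⊕ ↥A)) \ {Sum.inl p} = Sum.inr '' S' := by
    apply Set.diff_singleton_eq_self
    rintro ⟨e, -, h⟩
    exact absurd h (by simp)
  rw [accPts, Set.mem_setOf_eq, hd, inl_mem_closure_iff]

lemma inr_not_accPts {A : Set (Entourage T)} {e : ↥A} (S : Set (T ⊕ ↥A)) :
    Sum.inr e ∉ @accPts _ (tildeTop A) S := by
  letI := tildeTop A
  intro h
  rw [accPts, Set.mem_setOf_eq, mem_closure_iff] at h
  obtain ⟨x, hx1, hx2⟩ := h {Sum.inr e} (singleton_inr_isOpen e) rfl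
  exact hx2.2 hx1

lemma tendsto_inr_iff {A : Set (Entourage T)} {x : ℕ → ↥A} {p : T} :
    Filter.Tendsto (fun n => (Sum.inr (x n) : T ⊕ ↥A)) Filter.atTop
        (@nhds _ (tildeTop A) (Sum.inl p)) ↔
      ∀ o : Set T, IsOpen o → p ∈ o → ∀ᶠ n in Filter.atTop, eSmall (↑(x n)) oᶜ := by
  letI := tildeTop A
  constructor
  · intro h o ho hpo
    have hmem : hull A o ∈ nhds (Sum.inl p : T ⊕ ↥A) :=
      (hull_isOpen ho).mem_nhds (Or.inl ⟨p, hpo, rfl⟩)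
    filter_upwards [h hmem] with n hn
    exact inr_mem_hull.mp hn
  · intro h U hU
    rw [Filter.mem_map]
    rw [mem_nhds_iff] at hU
    obtain ⟨V, hVU, hVopen, hpV⟩ := hU
    obtain ⟨o, ho, hpo, hsub⟩ := tilde_basis hVopen p hpV
    filter_upwards [h o ho hpo] with n hn
    exact hVU (hsub (inr_mem_hull.mpr hn))

end Top

end RHG

namespace RHG

/-- Let `B` be an infinite subset of a discrete set `A` of entourages and let
`C = N_d(B)` be its `d`-neighborhood in the graph of entourages. Then the sets of
accumulation points of `B` and of `C` in `T̃ = T ⊔ A` coincide. In particular, two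
sequences in `A` at uniformly bounded distance `d_A` from each other converge to a point
`p ∈ T` simultaneously. -/
theorem boundary_of_neighborhood {T : Type*} [TopologicalSpace T]
    [CompactSpace T] [T2Space T] (h3 : HasThreePts T)
    (A : Set (Entourage T)) (hgood : ∀ a ∈ A, GoodEnt a) (hdisc : DiscreteEnts A)
    (B : Set (Entourage T)) (hBA : B ⊆ A) (hBinf : B.Infinite)
    (d : ℕ) (hd : 0 < d) :
    (@accPts _ (tildeTop A) (Sum.inr '' {e : ↥A | (e : Entourage T) ∈ B}) =
      @accPts _ (tildeTop A) (Sum.inr '' {e : ↥A | (e : Entourage T) ∈ Anbhd A d B})) ∧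
    ∀ (b c : ℕ → Entourage T) (hb : ∀ n, b n ∈ A) (hc : ∀ n, c n ∈ A),
      (∃ d' : ℕ, ∀ n, AdistLE A d' (b n) (c n)) →
      ∀ p : T,
        (Filter.Tendsto (fun n => (Sum.inr ⟨b n, hb n⟩ : T ⊕ ↥A)) Filter.atTop
            (@nhds _ (tildeTop A) (Sum.inl p)) ↔
          Filter.Tendsto (fun n => (Sum.inr ⟨c n, hc n⟩ : T ⊕ ↥A)) Filter.atTop
            (@nhds _ (tildeTop A) (Sum.inl p))) := by
  constructor
  · ext x
    cases x with
    | inl p =>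
      rw [inl_mem_accPts_iff, inl_mem_accPts_iff]
      constructor
      · intro h o ho hpo
        obtain ⟨e, heB, hsm⟩ := h o ho hpo
        exact ⟨e, ⟨e.2, ↑e, heB, adistLE_refl d e.2 (hgood _ e.2).1⟩, hsm⟩
      · intro h u hu hpu
        obtain ⟨o, ho, hpo, hou, H⟩ := key_iter A hgood hdisc p d u hu hpu
        obtain ⟨e, heC, hsm⟩ := h o ho hpo
        obtain ⟨-, b, hbB, hdist⟩ := heC
        exact ⟨⟨b, hBA hbB⟩, hbB, H (↑e) e.2 hsm b hdist⟩
    | inr e =>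
      exact iff_of_false (inr_not_accPts _) (inr_not_accPts _)
  · rintro b c hb hc ⟨d', hd'⟩ p
    refine Iff.trans tendsto_inr_iff (Iff.trans ?_ tendsto_inr_iff.symm)
    constructor
    · intro h u hu hpu
      obtain ⟨o, ho, hpo, -, H⟩ := key_iter A hgood hdisc p d' u hu hpu
      filter_upwards [h o ho hpo] with n hn
      exact H (b n) (hb n) hn (c n) (hd' n)
    · intro h u hu hpu
      obtain ⟨o, ho, hpo, -, H⟩ := key_iter A hgood hdisc p d' u hu hpu
      filter_upwards [h o ho hpo] with n hn
      exact H (c n) (hc n) hn (b n) (adistLE_symm (hd' n))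


end RHG
end
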